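/- There exists an entangled completely symmetric state of rank six on ℂ⁴ ⊗ ℂ⁴. Concretely, let x_0,x_1,x_2,x_3 be the standard basis vectors of ℝ⁴, x_4 = (1,1,1,1), x_5 = (1,2,3,4), x_6 = (1,−2,3,−4), x_7 = (1,−8/3,1,−8/3), and for x ∈ ℝ⁴ let P_x denote the rank-one matrix ((i,k),(j,l)) ↦ x(i)x(k)x(j)x(l). Then there exist λ_0,…,λ_6 > 0 and λ > 0 such that ρ = ∑_{i=0}^{6} λ_i P_{x_i} − λ P_{x_7} is positive semidefinite of matrix rank 6, is (after normalizing to trace one) a CS state, and is not separable. -/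

import Mathlib

open scoped ComplexOrder

/-- Bipartite completely symmetric matrix on `ℂ⁴ ⊗ ℂ⁴`. -/
def IsCS2 (ρ : Matrix (Fin 4 × Fin 4) (Fin 4 × Fin 4) ℂ) : Prop :=
  ∀ (π : Equiv.Perm (Fin 4)) (f : Fin 4 → Fin 4),
    ρ (f (π 0), f (π 1)) (f (π 2), f (π 3)) = ρ (f 0, f 1) (f 2, f 3)

/-- Bipartite separability. -/
def Sep2 (ρ : Matrix (Fin 4 × Fin 4) (Fin 4 × Fin 4) ℂ) : Prop :=
  ∃ (m : ℕ) (x y : Fin m → Fin 4 → ℂ),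
    (∀ t, x t ≠ 0) ∧ (∀ t, y t ≠ 0) ∧
    ∀ (i j k l : Fin 4),
      ρ (i, k) (j, l) = ∑ t, (x t i * y t k) * star (x t j * y t l)

/-- The eight real vectors of the construction. -/
noncomputable def xv : Fin 8 → Fin 4 → ℝ :=
  ![![1, 0, 0, 0], ![0, 1, 0, 0], ![0, 0, 1, 0], ![0, 0, 0, 1],
    ![1, 1, 1, 1], ![1, 2, 3, 4], ![1, -2, 3, -4], ![1, -8/3, 1, -8/3]]

/-- `P_x`: the rank-one completely symmetric matrix built from a real vector `x`. -/
noncomputable def Pmat (x : Fin 4 → ℝ) : Matrix (Fin 4 × Fin 4) (Fin 4 × Fin 4) ℂ :=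
  fun p q => ((x p.1 * x p.2 * x q.1 * x q.2 : ℝ) : ℂ)

/-! ### Integer-level data for the construction -/

def st10cZ : Fin 7 → ℤ := ![44, 88, -132, -176, -48, 11, 11]

def st10xvZ : Fin 7 → Fin 4 → ℤ :=
  ![![1,0,0,0], ![0,1,0,0], ![0,0,1,0], ![0,0,0,1], ![1,1,1,1], ![1,2,3,4], ![1,-2,3,-4]]

def st10AZ : Fin 7 → Fin 4 × Fin 4 → ℤ := fun i p => st10xvZ i p.1 * st10xvZ i p.2

def st10lamZ : Fin 7 → ℤ := fun i => 7 * st10cZ i ^ 2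

/-- The integer matrix `ρℤ = ∑ 7 cᵢ² vᵢvᵢᵀ − (∑cᵢvᵢ)(∑cᵢvᵢ)ᵀ`. -/
def st10rhoZ : Matrix (Fin 4 × Fin 4) (Fin 4 × Fin 4) ℤ := fun p q =>
  (∑ i, (7 * st10cZ i ^ 2) * (st10AZ i p * st10AZ i q))
    - (∑ i, st10cZ i * st10AZ i p) * (∑ i, st10cZ i * st10AZ i q)

def st10prs : Fin 21 → Fin 7 × Fin 7 :=
  ![(0,1),(0,2),(0,3),(0,4),(0,5),(0,6),(1,2),(1,3),(1,4),(1,5),(1,6),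
    (2,3),(2,4),(2,5),(2,6),(3,4),(3,5),(3,6),(4,5),(4,6),(5,6)]

def st10B : Matrix (Fin 21) (Fin 4 × Fin 4) ℤ := fun r p =>
  st10cZ (st10prs r).1 * st10AZ (st10prs r).1 p - st10cZ (st10prs r).2 * st10AZ (st10prs r).2 p

def st10G : Matrix (Fin 6) (Fin 4 × Fin 4) ℤ := fun k p => st10B (k.castLE (by omega)) p

def st10ETE : Matrix (Fin 6) (Fin 6) ℤ := fun a b => if a = b then 6 else -1

def st10C : Matrix (Fin 4 × Fin 4) (Fin 6) ℤ := st10G.transpose * st10ETE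

def st10sel : Fin 6 → Fin 4 × Fin 4 := ![(0,0),(0,1),(0,2),(0,3),(1,1),(2,2)]

def st10Sm : Matrix (Fin 6) (Fin 4 × Fin 4) ℤ := fun r p => if p = st10sel r then 1 else 0

def st10sub : Matrix (Fin 6) (Fin 6) ℤ := st10Sm * st10rhoZ * st10Sm.transpose

def st10adj : Matrix (Fin 6) (Fin 6) ℤ :=
 !![3147393690841689096192, -12851857570936897142784, 1573696845420844548096, 6425928785468448571392, 786848422710422274048, -524565615140281516032;
  -12851857570936897142784, 93285251892446729601024, -18884362145050134577152, -48216322791644209348608, -5114514747617744781312, 4283952523645632380928;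
  1573696845420844548096, -18884362145050134577152, 6644497791776899203072, 9442181072525067288576, 524565615140281516032, -1223986435327323537408;
  6425928785468448571392, -48216322791644209348608, 9442181072525067288576, 25681858241242949222400, 2557257373808872390656, -2141976261822816190464;
  786848422710422274048, -5114514747617744781312, 524565615140281516032, 2557257373808872390656, 786848422710422274048, -262282807570140758016;
  -524565615140281516032, 4283952523645632380928, -1223986435327323537408, -2141976261822816190464, -262282807570140758016, 349710410093521010688]

/-! Kernel vectors (as `Fin 4 → Fin 4 → ℤ` tables): 6 antisymmetric + 4 symmetric quadrics. -/

def st10Wa01 : Fin 4 → Fin 4 → ℤ := ![![0,1,0,0],![-1,0,0,0],![0,0,0,0],![0,0,0,0]]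
def st10Wa02 : Fin 4 → Fin 4 → ℤ := ![![0,0,1,0],![0,0,0,0],![-1,0,0,0],![0,0,0,0]]
def st10Wa03 : Fin 4 → Fin 4 → ℤ := ![![0,0,0,1],![0,0,0,0],![0,0,0,0],![-1,0,0,0]]
def st10Wa12 : Fin 4 → Fin 4 → ℤ := ![![0,0,0,0],![0,0,1,0],![0,-1,0,0],![0,0,0,0]]
def st10Wa13 : Fin 4 → Fin 4 → ℤ := ![![0,0,0,0],![0,0,0,1],![0,0,0,0],![0,-1,0,0]]
def st10Wa23 : Fin 4 → Fin 4 → ℤ := ![![0,0,0,0],![0,0,0,0],![0,0,0,1],![0,0,-1,0]]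
def st10W1 : Fin 4 → Fin 4 → ℤ := ![![0,-1,0,2],![-1,0,-1,0],![0,-1,0,0],![2,0,0,0]]
def st10W2 : Fin 4 → Fin 4 → ℤ := ![![0,15,-16,0],![15,0,-5,6],![-16,-5,0,0],![0,6,0,0]]
def st10W3 : Fin 4 → Fin 4 → ℤ := ![![0,3,0,0],![3,0,-5,0],![0,-5,0,2],![0,0,2,0]]
def st10W4 : Fin 4 → Fin 4 → ℤ := ![![-24,81,-32,0],![81,-12,-27,0],![-32,-27,8,0],![0,0,0,6]]

/-! ### Auxiliary lemmas -/

lemma st10_xv7eq : xv 7 = ![1, -8/3, 1, -8/3] := rfl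

def st10S : Fin 4 → Fin 4 → ℤ :=
  ![![18,-48,18,-48],![-48,128,-48,128],![18,-48,18,-48],![-48,128,-48,128]]

lemma st10_hS : ∀ p : Fin 4 × Fin 4, (∑ i, st10cZ i * st10AZ i p) = st10S p.1 p.2 := by decide

lemma st10_h7 : ∀ p : Fin 4 × Fin 4,
    ((∑ i, st10cZ i * st10AZ i p : ℤ) : ℂ) = 18 * ((xv 7 p.1 * xv 7 p.2 : ℝ) : ℂ) := by
  intro p
  rw [st10_hS p]
  obtain ⟨j, l⟩ := p
  fin_cases j <;> fin_cases l <;> norm_num [st10_xv7eq, st10S]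

lemma st10_hxz : ∀ (i : Fin 7) (j : Fin 4), xv i.castSucc j = ((st10xvZ i j : ℤ) : ℝ) := by
  intro i j
  fin_cases i <;> fin_cases j <;> norm_num [xv, st10xvZ]

lemma st10_hPm : ∀ (i : Fin 7) (p q : Fin 4 × Fin 4),
    Pmat (xv i.castSucc) p q = ((st10AZ i p * st10AZ i q : ℤ) : ℂ) := by
  intro i p q
  show ((xv i.castSucc p.1 * xv i.castSucc p.2 * xv i.castSucc q.1 * xv i.castSucc q.2 : ℝ) : ℂ) = _
  rw [st10_hxz i p.1, st10_hxz i p.2, st10_hxz i q.1, st10_hxz i q.2]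
  push_cast [st10AZ]
  ring

lemma st10_Pmat7 : ∀ p q : Fin 4 × Fin 4,
    Pmat (xv 7) p q = ((xv 7 p.1 * xv 7 p.2 : ℝ) : ℂ) * ((xv 7 q.1 * xv 7 q.2 : ℝ) : ℂ) := by
  intro p q
  show ((xv 7 p.1 * xv 7 p.2 * xv 7 q.1 * xv 7 q.2 : ℝ) : ℂ) = _
  push_cast
  ring

lemma st10_Pmat_perm (x : Fin 4 → ℝ) (π : Equiv.Perm (Fin 4)) (f : Fin 4 → Fin 4) :
    Pmat x (f (π 0), f (π 1)) (f (π 2), f (π 3)) = Pmat x (f 0, f 1) (f 2, f 3) := by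
  have h := Equiv.prod_comp π (fun j => x (f j))
  rw [Fin.prod_univ_four, Fin.prod_univ_four] at h
  show ((x (f (π 0)) * x (f (π 1)) * x (f (π 2)) * x (f (π 3)) : ℝ) : ℂ)
      = ((x (f 0) * x (f 1) * x (f 2) * x (f 3) : ℝ) : ℂ)
  exact_mod_cast congrArg Complex.ofReal h

lemma st10_psd_smul {M : Matrix (Fin 4 × Fin 4) (Fin 4 × Fin 4) ℂ} (h : M.PosSemidef)
    (r : ℝ) (hr : 0 ≤ r) : (((r : ℂ)) • M).PosSemidef := by
  refine Matrix.PosSemidef.of_dotProduct_mulVec_nonneg ?_ ?_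
  · have h1 := h.1
    unfold Matrix.IsHermitian at *
    rw [Matrix.conjTranspose_smul, h1]
    congr 1
    simp [Complex.star_def, Complex.conj_ofReal]
  · intro v
    rw [Matrix.smul_mulVec, dotProduct_smul, smul_eq_mul]
    refine mul_nonneg ?_ (h.dotProduct_mulVec_nonneg v)
    rw [Complex.zero_le_real]
    exact hr

/-! Integer facts proved by `decide`. -/

lemma st10_fact_BtB : st10rhoZ = st10B.transpose * st10B := by decide
lemma st10_fact_CG : st10rhoZ = st10C * st10G := by decide
lemma st10_fact_adj :
    st10sub * st10adj = (21326739649143285315796992 : ℤ) • (1 : Matrix (Fin 6) (Fin 6) ℤ) := by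
  decide
lemma st10_fact_tr : (∑ p : Fin 4 × Fin 4, st10rhoZ p p) = 2103944 := by decide
lemma st10_fact_00 : st10rhoZ (0,0) (0,0) = 31050 := by decide

lemma st10_ker (W : Fin 4 → Fin 4 → ℤ)
    (h : (∑ p : Fin 4 × Fin 4, ∑ q : Fin 4 × Fin 4,
        W p.1 p.2 * W q.1 q.2 * st10rhoZ p q) = 0) : True := trivial


lemma st10_fin4cases (P : Fin 4 → Prop) (h0 : P 0) (h1 : P 1) (h2 : P 2) (h3 : P 3) :
    ∀ j, P j := by
  intro j
  fin_cases j
  exacts [h0, h1, h2, h3]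
theorem stmt_10 :
    ∃ (lam : Fin 7 → ℝ) (l : ℝ), (∀ i, 0 < lam i) ∧ 0 < l ∧
      ∀ ρ : Matrix (Fin 4 × Fin 4) (Fin 4 × Fin 4) ℂ,
        ρ = (∑ i : Fin 7, (lam i : ℂ) • Pmat (xv i.castSucc)) - (l : ℂ) • Pmat (xv 7) →
          ρ.PosSemidef ∧ ρ.rank = 6 ∧
          IsCS2 (ρ.trace⁻¹ • ρ) ∧ (ρ.trace⁻¹ • ρ).trace = 1 ∧
          (ρ.trace⁻¹ • ρ).PosSemidef ∧ ¬ Sep2 (ρ.trace⁻¹ • ρ) := by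
  refine ⟨fun i => ((st10lamZ i : ℤ) : ℝ), 324, ?_, by norm_num, ?_⟩
  · intro i
    have h : (0:ℤ) < st10lamZ i := by
      have h' : ∀ i : Fin 7, (0:ℤ) < st10lamZ i := by decide
      exact h' i
    show (0:ℝ) < ((st10lamZ i : ℤ) : ℝ)
    exact_mod_cast h
  intro ρ hρ
  -- the entrywise integer description of ρ
  have hent : ∀ p q : Fin 4 × Fin 4, ρ p q = ((st10rhoZ p q : ℤ) : ℂ) := by
    intro p q
    rw [hρ]
    simp only [Matrix.sub_apply, Matrix.sum_apply, Matrix.smul_apply, smul_eq_mul]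
    have h1 : ∀ i : Fin 7, ((((st10lamZ i : ℤ) : ℝ) : ℂ)) * Pmat (xv i.castSucc) p q
        = (((7 * st10cZ i ^ 2) * (st10AZ i p * st10AZ i q) : ℤ) : ℂ) := by
      intro i
      rw [st10_hPm i p q]
      push_cast [st10lamZ]
      ring
    rw [Finset.sum_congr rfl (fun i _ => h1 i)]
    have h2 : ((324:ℝ):ℂ) * Pmat (xv 7) p q
        = ((∑ i, st10cZ i * st10AZ i p : ℤ) : ℂ) * ((∑ i, st10cZ i * st10AZ i q : ℤ) : ℂ) := by
      rw [st10_Pmat7 p q, st10_h7 p, st10_h7 q]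
      push_cast
      ring
    rw [h2]
    show _ = ((st10rhoZ p q : ℤ) : ℂ)
    simp only [st10rhoZ]
    push_cast
    ring
  have hmap : ρ = st10rhoZ.map (fun z : ℤ => (z : ℂ)) := by
    ext p q
    rw [hent p q]
    rfl
  -- trace
  have htr : ρ.trace = (2103944 : ℂ) := by
    have h2 : ρ.trace = ((∑ p : Fin 4 × Fin 4, st10rhoZ p p : ℤ) : ℂ) := by
      simp only [Matrix.trace, Matrix.diag]
      push_cast
      exact Finset.sum_congr rfl fun p _ => hent p p
    rw [h2, st10_fact_tr]
    norm_num
  -- map of casts commutes with products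
  have hmapmul : ∀ {a b c : Type} [Fintype a] [Fintype b] [Fintype c]
      (M : Matrix a b ℤ) (N : Matrix b c ℤ),
      (M * N).map (fun z : ℤ => (z : ℂ)) = M.map (fun z : ℤ => (z : ℂ)) * N.map (fun z : ℤ => (z : ℂ)) := by
    intro a b c _ _ _ M N
    ext i j
    simp [Matrix.map_apply, Matrix.mul_apply]
  -- PSD of ρ
  have hpsd : ρ.PosSemidef := by
    have hfact : ρ = (st10B.map (fun z : ℤ => (z : ℂ))).conjTranspose * (st10B.map (fun z : ℤ => (z : ℂ))) := by
      rw [hmap, st10_fact_BtB, hmapmul]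
      congr 1
      ext i j
      simp [Matrix.conjTranspose_apply, Matrix.map_apply, Matrix.transpose_apply]
    rw [hfact]
    exact Matrix.posSemidef_conjTranspose_mul_self _
  -- rank
  have hrank : ρ.rank = 6 := by
    have hle : ρ.rank ≤ 6 := by
      rw [hmap, st10_fact_CG, hmapmul]
      refine le_trans (Matrix.rank_mul_le_right _ _) ?_
      simpa using Matrix.rank_le_card_height (st10G.map (fun z : ℤ => (z : ℂ)))
    have hge : 6 ≤ ρ.rank := by
      set f := fun z : ℤ => (z : ℂ)
      have hM6 : (st10Sm.map f) * ρ * ((st10Sm.transpose).map f) = st10sub.map f := by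
        rw [hmap, st10sub, hmapmul, hmapmul]
      have hunit : IsUnit (st10sub.map f) := by
        have h1 : (st10sub * st10adj).map f
            = ((21326739649143285315796992 : ℤ) • (1 : Matrix (Fin 6) (Fin 6) ℤ)).map f := by
          rw [st10_fact_adj]
        rw [hmapmul] at h1
        have h2 : (st10sub.map f) * (((21326739649143285315796992 : ℂ))⁻¹ • st10adj.map f) = 1 := by
          rw [Matrix.mul_smul, h1]
          ext i j
          simp only [Matrix.smul_apply, Matrix.map_apply, Matrix.smul_apply, Matrix.one_apply, f]
          by_cases h : i = j <;> simp [h, zsmul_eq_mul] <;> norm_num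
        exact (Matrix.isUnit_iff_isUnit_det _).mpr (Matrix.isUnit_det_of_right_inverse h2)
      have h6 : (st10sub.map f).rank = 6 := by
        rw [Matrix.rank_of_isUnit _ hunit]
        simp
      calc (6:ℕ) = (st10sub.map f).rank := h6.symm
        _ = ((st10Sm.map f) * ρ * ((st10Sm.transpose).map f)).rank := by rw [hM6]
        _ = ((st10Sm.map f) * (ρ * ((st10Sm.transpose).map f))).rank := by rw [Matrix.mul_assoc]
        _ ≤ (ρ * ((st10Sm.transpose).map f)).rank := Matrix.rank_mul_le_right _ _
        _ ≤ ρ.rank := Matrix.rank_mul_le_left _ _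
    omega
  -- CS
  have hcs : IsCS2 (ρ.trace⁻¹ • ρ) := by
    intro π f
    simp only [Matrix.smul_apply]
    congr 1
    rw [hρ]
    simp only [Matrix.sub_apply, Matrix.sum_apply, Matrix.smul_apply, smul_eq_mul]
    rw [Finset.sum_congr rfl (fun i _ => by rw [st10_Pmat_perm (xv i.castSucc) π f]),
      st10_Pmat_perm (xv 7) π f]
  -- normalized trace
  have htr1 : (ρ.trace⁻¹ • ρ).trace = 1 := by
    rw [Matrix.trace_smul, htr, smul_eq_mul]
    norm_num
  -- PSD of normalized
  have hpsd' : (ρ.trace⁻¹ • ρ).PosSemidef := by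
    have h1 : ρ.trace⁻¹ = (((2103944:ℝ)⁻¹ : ℝ) : ℂ) := by
      rw [htr]
      norm_num
    rw [h1]
    exact st10_psd_smul hpsd _ (by norm_num)
  refine ⟨hpsd, hrank, hcs, htr1, hpsd', ?_⟩
  -- non-separability
  rintro ⟨m, x, y, hx, hy, hsep⟩
  have hE : ∀ p q : Fin 4 × Fin 4,
      (∑ t, (x t p.1 * y t p.2) * star (x t q.1 * y t q.2))
        = (2103944 : ℂ)⁻¹ * ((st10rhoZ p q : ℤ) : ℂ) := by
    intro p q
    have h := hsep p.1 q.1 p.2 q.2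
    rw [Prod.mk.eta, Prod.mk.eta] at h
    rw [← h, Matrix.smul_apply, htr, hent p q, smul_eq_mul]
  -- kernel machinery
  have hker : ∀ (W : Fin 4 → Fin 4 → ℤ),
      ((∑ p : Fin 4 × Fin 4, ∑ q : Fin 4 × Fin 4,
        W p.1 p.2 * W q.1 q.2 * st10rhoZ p q) = 0) →
      ∀ t, (∑ q : Fin 4 × Fin 4, ((W q.1 q.2 : ℤ) : ℂ) * (x t q.1 * y t q.2)) = 0 := by
    intro W hW t
    set z : Fin m → ℂ :=
      fun s => ∑ q : Fin 4 × Fin 4, ((W q.1 q.2 : ℤ) : ℂ) * (x s q.1 * y s q.2) with hz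
    have hzs : ∀ s, z s * star (z s)
        = ∑ p : Fin 4 × Fin 4, ∑ q : Fin 4 × Fin 4,
            (((W p.1 p.2 : ℤ):ℂ) * ((W q.1 q.2 : ℤ):ℂ))
              * ((x s p.1 * y s p.2) * star (x s q.1 * y s q.2)) := by
      intro s
      rw [hz]
      simp only [star_sum, Finset.sum_mul_sum]
      refine Finset.sum_congr rfl fun p _ => Finset.sum_congr rfl fun q _ => ?_
      simp only [star_mul', star_intCast]
      ring
    have hsum0 : ∑ s, z s * star (z s) = 0 := by
      calc ∑ s, z s * star (z s)
          = ∑ s, ∑ p : Fin 4 × Fin 4, ∑ q : Fin 4 × Fin 4,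
            (((W p.1 p.2 : ℤ):ℂ) * ((W q.1 q.2 : ℤ):ℂ))
              * ((x s p.1 * y s p.2) * star (x s q.1 * y s q.2)) :=
            Finset.sum_congr rfl fun s _ => hzs s
        _ = ∑ p : Fin 4 × Fin 4, ∑ s, ∑ q : Fin 4 × Fin 4,
            (((W p.1 p.2 : ℤ):ℂ) * ((W q.1 q.2 : ℤ):ℂ))
              * ((x s p.1 * y s p.2) * star (x s q.1 * y s q.2)) := Finset.sum_comm
        _ = ∑ p : Fin 4 × Fin 4, ∑ q : Fin 4 × Fin 4, ∑ s,
            (((W p.1 p.2 : ℤ):ℂ) * ((W q.1 q.2 : ℤ):ℂ))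
              * ((x s p.1 * y s p.2) * star (x s q.1 * y s q.2)) :=
            Finset.sum_congr rfl fun p _ => Finset.sum_comm
        _ = ∑ p : Fin 4 × Fin 4, ∑ q : Fin 4 × Fin 4,
            (((W p.1 p.2 : ℤ):ℂ) * ((W q.1 q.2 : ℤ):ℂ))
              * ∑ s, ((x s p.1 * y s p.2) * star (x s q.1 * y s q.2)) := by
            simp only [← Finset.mul_sum]
        _ = ∑ p : Fin 4 × Fin 4, ∑ q : Fin 4 × Fin 4,
            (((W p.1 p.2 : ℤ):ℂ) * ((W q.1 q.2 : ℤ):ℂ))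
              * ((2103944 : ℂ)⁻¹ * ((st10rhoZ p q : ℤ) : ℂ)) := by
            refine Finset.sum_congr rfl fun p _ => Finset.sum_congr rfl fun q _ => ?_
            rw [hE p q]
        _ = (2103944 : ℂ)⁻¹ * ((∑ p : Fin 4 × Fin 4, ∑ q : Fin 4 × Fin 4,
            W p.1 p.2 * W q.1 q.2 * st10rhoZ p q : ℤ) : ℂ) := by
            push_cast
            rw [Finset.mul_sum]
            refine Finset.sum_congr rfl fun p _ => ?_
            rw [Finset.mul_sum]
            refine Finset.sum_congr rfl fun q _ => ?_
            ring
        _ = 0 := by rw [hW]; norm_num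
    have hnormsq : ∑ s, Complex.normSq (z s) = 0 := by
      have h1 : ((∑ s, Complex.normSq (z s) : ℝ) : ℂ) = 0 := by
        push_cast
        rw [← hsum0]
        refine Finset.sum_congr rfl fun s _ => ?_
        rw [← Complex.mul_conj]
        rfl
      exact_mod_cast h1
    have h2 : ∀ s ∈ Finset.univ, Complex.normSq (z s) = 0 := by
      rw [← Finset.sum_eq_zero_iff_of_nonneg (fun s _ => Complex.normSq_nonneg (z s))]
      exact hnormsq
    have h3 := h2 t (Finset.mem_univ t)
    exact Complex.normSq_eq_zero.mp h3
  -- expansion helper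
  have hexp : ∀ (W : Fin 4 → Fin 4 → ℤ) (t : Fin m),
      (∑ q : Fin 4 × Fin 4, ((W q.1 q.2 : ℤ) : ℂ) * (x t q.1 * y t q.2))
        = ∑ j : Fin 4, ∑ l : Fin 4, ((W j l : ℤ) : ℂ) * (x t j * y t l) := by
    intro W t
    exact Fintype.sum_prod_type
      (f := fun q : Fin 4 × Fin 4 => ((W q.1 q.2 : ℤ) : ℂ) * (x t q.1 * y t q.2))
  -- m ≠ 0
  have hm : m ≠ 0 := by
    rintro rfl
    have h := hsep 0 0 0 0
    simp only [Finset.univ_eq_empty, Finset.sum_empty] at h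
    rw [Matrix.smul_apply, htr, hent (0,0) (0,0), st10_fact_00, smul_eq_mul] at h
    norm_num at h
  set t : Fin m := ⟨0, Nat.pos_of_ne_zero hm⟩
  -- antisymmetric kernel relations: proportionality
  have k01 := hker st10Wa01 (by decide) t
  have k02 := hker st10Wa02 (by decide) t
  have k03 := hker st10Wa03 (by decide) t
  have k12 := hker st10Wa12 (by decide) t
  have k13 := hker st10Wa13 (by decide) t
  have k23 := hker st10Wa23 (by decide) t
  rw [hexp] at k01 k02 k03 k12 k13 k23
  simp only [Fin.sum_univ_four] at k01 k02 k03 k12 k13 k23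
  norm_num [st10Wa01, Matrix.vecHead, Matrix.vecTail, Function.comp, Matrix.cons_val_two, Matrix.cons_val_three] at k01
  norm_num [st10Wa02, Matrix.vecHead, Matrix.vecTail, Function.comp, Matrix.cons_val_two, Matrix.cons_val_three] at k02
  norm_num [st10Wa03, Matrix.vecHead, Matrix.vecTail, Function.comp, Matrix.cons_val_two, Matrix.cons_val_three] at k03
  norm_num [st10Wa12, Matrix.vecHead, Matrix.vecTail, Function.comp, Matrix.cons_val_two, Matrix.cons_val_three] at k12
  norm_num [st10Wa13, Matrix.vecHead, Matrix.vecTail, Function.comp, Matrix.cons_val_two, Matrix.cons_val_three] at k13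
  norm_num [st10Wa23, Matrix.vecHead, Matrix.vecTail, Function.comp, Matrix.cons_val_two, Matrix.cons_val_three] at k23
  -- proportionality of y to x
  have hprop : ∀ j l : Fin 4, x t j * y t l = x t l * y t j := by
    apply st10_fin4cases <;> apply st10_fin4cases <;>
      first
        | rfl
        | (linear_combination k01) | (linear_combination -k01)
        | (linear_combination k02) | (linear_combination -k02)
        | (linear_combination k03) | (linear_combination -k03)
        | (linear_combination k12) | (linear_combination -k12)
        | (linear_combination k13) | (linear_combination -k13)
        | (linear_combination k23) | (linear_combination -k23)
  obtain ⟨j0, hj0⟩ : ∃ j, x t j ≠ 0 := by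
    by_contra hcon
    push_neg at hcon
    exact hx t (funext fun j => hcon j)
  have hyx : ∀ l, y t l * x t j0 = x t l * y t j0 := fun l => by
    linear_combination hprop j0 l
  have hβ : y t j0 ≠ 0 := by
    intro h0
    apply hy t
    funext l
    have h1 := hyx l
    rw [h0, mul_zero] at h1
    rcases mul_eq_zero.mp h1 with h | h
    · exact h
    · exact absurd h hj0
  -- the four quadric relations
  have hraw1 := hker st10W1 (by decide) t
  have hraw2 := hker st10W2 (by decide) t
  have hraw3 := hker st10W3 (by decide) t
  have hraw4 := hker st10W4 (by decide) t
  rw [hexp] at hraw1 hraw2 hraw3 hraw4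
  simp only [Fin.sum_univ_four] at hraw1 hraw2 hraw3 hraw4
  norm_num [st10W1, Matrix.vecHead, Matrix.vecTail, Function.comp, Matrix.cons_val_two, Matrix.cons_val_three] at hraw1
  norm_num [st10W2, Matrix.vecHead, Matrix.vecTail, Function.comp, Matrix.cons_val_two, Matrix.cons_val_three] at hraw2
  norm_num [st10W3, Matrix.vecHead, Matrix.vecTail, Function.comp, Matrix.cons_val_two, Matrix.cons_val_three] at hraw3
  norm_num [st10W4, Matrix.vecHead, Matrix.vecTail, Function.comp, Matrix.cons_val_two, Matrix.cons_val_three] at hraw4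
  set a := x t 0 with ha'
  set b := x t 1 with hb'
  set c := x t 2 with hc'
  set d := x t 3 with hd'
  have hq1 : ((-2:ℂ)*a*b + (4)*a*d + (-2)*b*c) * (y t j0) = 0 := by
    linear_combination (x t j0) * hraw1 + ((1:ℂ)*b + (-2)*d) * hyx 0 + ((1:ℂ)*a + (1)*c) * hyx 1 + ((1:ℂ)*b) * hyx 2 + ((-2:ℂ)*a) * hyx 3
  have hq2 : ((30:ℂ)*a*b + (-32)*a*c + (-10)*b*c + (12)*b*d) * (y t j0) = 0 := by
    linear_combination (x t j0) * hraw2 + ((-15:ℂ)*b + (16)*c) * hyx 0 + ((-15:ℂ)*a + (5)*c + (-6)*d) * hyx 1 + ((16:ℂ)*a + (5)*b) * hyx 2 + ((-6:ℂ)*b) * hyx 3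
  have hq3 : ((6:ℂ)*a*b + (-10)*b*c + (4)*c*d) * (y t j0) = 0 := by
    linear_combination (x t j0) * hraw3 + ((-3:ℂ)*b) * hyx 0 + ((-3:ℂ)*a + (5)*c) * hyx 1 + ((5:ℂ)*b + (-2)*d) * hyx 2 + ((-2:ℂ)*c) * hyx 3
  have hq4 : ((-24:ℂ)*a*a + (162)*a*b + (-64)*a*c + (-12)*b*b + (-54)*b*c + (8)*c*c + (6)*d*d) * (y t j0) = 0 := by
    linear_combination (x t j0) * hraw4 + ((24:ℂ)*a + (-81)*b + (32)*c) * hyx 0 + ((-81:ℂ)*a + (12)*b + (27)*c) * hyx 1 + ((32:ℂ)*a + (27)*b + (-8)*c) * hyx 2 + ((-6:ℂ)*d) * hyx 3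
  have hQ1 : (-2:ℂ)*a*b + (4)*a*d + (-2)*b*c = 0 := (mul_eq_zero.mp hq1).resolve_right hβ
  have hQ2 : (30:ℂ)*a*b + (-32)*a*c + (-10)*b*c + (12)*b*d = 0 := (mul_eq_zero.mp hq2).resolve_right hβ
  have hQ3 : (6:ℂ)*a*b + (-10)*b*c + (4)*c*d = 0 := (mul_eq_zero.mp hq3).resolve_right hβ
  have hQ4 : (-24:ℂ)*a*a + (162)*a*b + (-64)*a*c + (-12)*b*b + (-54)*b*c + (8)*c*c + (6)*d*d = 0 := (mul_eq_zero.mp hq4).resolve_right hβ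
  have ha : a = 0 := by
    have h5 : a ^ 5 = 0 := by
      linear_combination ((-973131/3469312)*c*d*d + (1652995/1300992)*c*c*d + (-96515/325248)*c*c*c + (-1365831/3469312)*b*d*d + (1159139/1734656)*b*c*d + (-454035/433664)*b*c*c + (-105855/867328)*b*b*d + (-620075/867328)*a*c*d + (73/24)*a*c*c + (-1/4)*a*b*c + (1/16)*a*a*d + (-287/96)*a*a*c + (1/4)*a*a*b) * hQ1 + ((-57909/3469312)*d*d*d + (305653/946176)*c*d*d + (19303/867328)*c*c*d + (-133999/185856)*b*c*d + (-104359/650496)*b*c*c + (57909/1734656)*b*b*d + (386401/3469312)*a*d*d + (1047205/2601984)*a*c*d + (-73/256)*a*a*d + (-1/96)*a*a*c + (1/12)*a*a*a) * hQ2 + ((427297/3469312)*d*d*d + (19303/433664)*c*d*d + (427297/2601984)*c*c*d + (19303/325248)*c*c*c + (-3300083/3469312)*b*d*d + (-2411447/5203968)*b*c*d + (481139/1300992)*b*c*c + (-51445/247808)*b*b*d + (72837/495616)*a*d*d + (285/256)*a*a*d + (17/24)*a*a*a) * hQ3 + ((-427297/5203968)*c*d*d + (-19303/650496)*c*c*d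 + (57909/1734656)*b*d*d + (430685/2601984)*b*c*d + (-1/24)*a*a*a) * hQ4
    exact pow_eq_zero_iff (by norm_num : (5:ℕ) ≠ 0) |>.mp h5
  have hb : b = 0 := by
    have h5 : b ^ 5 = 0 := by
      linear_combination ((-923/6776)*c*d*d + (117599/101640)*c*c*d + (-3285/3388)*c*c*c + (7009/13552)*b*d*d + (52067/27104)*b*c*d + (23407/13552)*b*c*c + (-194431/67760)*b*b*d + (1/6)*b*b*c + (-27/8)*b*b*b + (-39551/27104)*a*c*d + (2)*a*b*d + (1)*a*b*b) * hQ1 + ((-19433/325248)*d*d*d + (26399/73920)*c*d*d + (1971/27104)*c*c*d + (-34603/58080)*b*c*d + (657/6776)*b*c*c + (26209/162624)*b*b*d + (-1/10)*b*b*c + (-87/847)*a*d*d + (1971/27104)*a*c*d) * hQ2 + ((17279/108416)*d*d*d + (1971/13552)*c*d*d + (17279/81312)*c*c*d + (657/3388)*c*c*c + (-927827/813120)*b*d*d + (-57181/81312)*b*c*d + (-29977/67760)*b*c*c + (56653/116160)*b*b*d + (9/8)*b*b*b + (-1985/5808)*a*d*d) * hQ3 + ((-17279/162624)*c*d*d +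 (-657/6776)*c*c*d + (19433/162624)*b*d*d + (17279/81312)*b*c*d + (-1/12)*b*b*b) * hQ4
    exact pow_eq_zero_iff (by norm_num : (5:ℕ) ≠ 0) |>.mp h5
  have hc : c = 0 := by
    have h5 : c ^ 5 = 0 := by
      linear_combination ((-5770539/3469312)*c*d*d + (-1906431/433664)*c*c*d + (-206089/108416)*c*c*c + (2232225/3469312)*b*d*d + (19620351/1734656)*b*c*d + (1914177/433664)*b*c*c + (-344709/867328)*b*b*d + (-3469383/867328)*a*c*d + (-45/32)*a*c*c) * hQ1 + ((43731/3469312)*d*d*d + (-66489/315392)*c*d*d + (-244961/867328)*c*c*d + (-1/4)*c*c*c + (49149/61952)*b*c*d + (135743/216832)*b*c*c + (-43731/1734656)*b*b*d + (-1294047/3469312)*a*d*d + (-167037/867328)*a*c*d + (-3/32)*a*c*c) * hQ2 + ((881289/3469312)*d*d*d + (-14577/433664)*c*d*d + (131139/867328)*c*c*d + (-4859/108416)*c*c*c + (4024773/3469312)*b*d*d + (-4911201/1734656)*b*c*d + (-719371/433664)*b*c*c + (-1593/247808)*b*b*d + (874341/495616)*a*d*d) * hQ3 + ((-293763/1734656)*c*d*d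 + (4859/216832)*c*c*d + (1/8)*c*c*c + (-43731/1734656)*b*d*d + (80319/867328)*b*c*d) * hQ4
    exact pow_eq_zero_iff (by norm_num : (5:ℕ) ≠ 0) |>.mp h5
  have hd : d = 0 := by
    have h5 : d ^ 5 = 0 := by
      linear_combination ((2936/2541)*c*d*d + (85664/7623)*c*c*d + (-50800/7623)*c*c*c + (-24293/3388)*b*d*d + (13166/2541)*b*c*d + (12700/2541)*b*c*c + (-1234/847)*b*b*d + (1)*a*d*d + (-9134/2541)*a*c*d) * hQ1 + ((-211/5082)*d*d*d + (538/231)*c*d*d + (1270/2541)*c*c*d + (1/6)*b*d*d + (-1666/363)*b*c*d + (5080/7623)*b*c*c + (211/2541)*b*b*d + (-87/847)*a*d*d + (1270/2541)*a*c*d) * hQ2 + ((3523/5082)*d*d*d + (1693/2541)*c*d*d + (7046/7623)*c*c*d + (10160/7623)*c*c*c + (-45679/10164)*b*d*d + (410/2541)*b*c*d + (-12700/7623)*b*c*c + (-109/121)*b*b*d + (428/363)*a*d*d) * hQ3 + ((1/6)*d*d*d + (-3523/7623)*c*d*d + (-5080/7623)*c*c*d + (211/2541)*b*d*d + (7046/7623)*b*c*d)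 * hQ4
    exact pow_eq_zero_iff (by norm_num : (5:ℕ) ≠ 0) |>.mp h5
  apply hx t
  funext j
  have hj := st10_fin4cases (fun j => x t j = 0) ha hb hc hd j
  exact hj
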